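/- For integers m ≥ 0 and 0 ≤ j ≤ 2m, the middle-row entries of the symmetric Krawtchouk matrix of order 2m satisfy: if j is even, C(2m,j) · Φ^{2m}_{m,j} = (−1)^{j/2} · C(m, j/2) · C(2m, m); if j is odd, Φ^{2m}_{m,j} = 0. -/

import Mathlib

open Finset Polynomial

private lemma choose_four (a b c d : ℕ) :
    ((a+b)+(c+d)).choose (a+b) * ((a+b).choose a) * ((c+d).choose c)
      = ((a+c)+(b+d)).choose (a+c) * ((a+c).choose a) * ((b+d).choose b) := by
  have hfac : ∀ n : ℕ, ((n.factorial : ℚ)) ≠ 0 := fun n => Nat.cast_ne_zero.2 (Nat.factorial_ne_zero _)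
  have hq : ((((a+b)+(c+d)).choose (a+b) * ((a+b).choose a) * ((c+d).choose c) : ℕ) : ℚ)
      = ((((a+c)+(b+d)).choose (a+c) * ((a+c).choose a) * ((b+d).choose b) : ℕ) : ℚ) := by
    push_cast
    rw [Nat.cast_add_choose, Nat.cast_add_choose, Nat.cast_add_choose,
      Nat.cast_add_choose, Nat.cast_add_choose, Nat.cast_add_choose]
    rw [show (a+c)+(b+d) = (a+b)+(c+d) by omega]
    field_simp
  exact_mod_cast hq

private lemma coeff_one_sub_X_pow (m k : ℕ) :
    ((1 - X : Polynomial ℤ) ^ m).coeff k = (-1 : ℤ)^k * m.choose k := by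
  rw [show (1 - X : Polynomial ℤ) = X * C (-1) + 1 by simp; ring, add_pow]
  simp only [one_pow, mul_one, mul_pow, ← C_pow, finset_sum_coeff, ← C_eq_natCast,
    mul_assoc, ← C_mul, coeff_mul_C]
  rw [Finset.sum_eq_single k]
  · by_cases hk : k ≤ m
    · simp [coeff_X_pow, mul_comm]
    · simp [Nat.choose_eq_zero_of_lt (show m < k by omega), coeff_X_pow]
  · intro i _ hik
    simp [coeff_X_pow, Ne.symm hik]
  · intro h
    simp only [mem_range, not_lt] at h
    simp [Nat.choose_eq_zero_of_lt (show m < k by omega), coeff_X_pow]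

private lemma coeff_one_sub_X_sq_pow (m k : ℕ) :
    ((1 - X^2 : Polynomial ℤ) ^ m).coeff k =
      if Even k then (-1 : ℤ)^(k/2) * m.choose (k/2) else 0 := by
  rw [show (1 - X^2 : Polynomial ℤ) = X^2 * C (-1) + 1 by simp; ring, add_pow]
  simp only [one_pow, mul_one, mul_pow, ← C_pow, finset_sum_coeff, ← C_eq_natCast,
    mul_assoc, ← C_mul, coeff_mul_C, ← pow_mul]
  rw [Finset.sum_eq_single (k/2)]
  · by_cases hk : Even k
    · rw [if_pos hk]
      have hk' := hk
      rw [Nat.even_iff] at hk'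
      by_cases hk2 : k/2 ≤ m
      · have h2 : 2 * (k/2) = k := by omega
        simp [coeff_X_pow, h2, mul_comm]
      · simp [Nat.choose_eq_zero_of_lt (show m < k/2 by omega), coeff_X_pow]
    · rw [if_neg hk]
      rw [Nat.even_iff] at hk
      have h2 : ¬ (k = 2 * (k/2)) := by omega
      simp [coeff_X_pow, h2]
  · intro i _ hik
    have h2 : ¬ (k = 2 * i) := by rintro rfl; omega
    simp [coeff_X_pow, h2]
  · intro h
    simp only [mem_range, not_lt] at h
    have h2 : ¬ (k = 2 * (k/2)) ∨ m < k/2 := by omega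
    rcases h2 with h2 | h2
    · simp [coeff_X_pow, h2]
    · simp [Nat.choose_eq_zero_of_lt h2, coeff_X_pow]

private lemma alt_vandermonde (m j : ℕ) :
    ∑ k ∈ range (j+1), (-1 : ℤ)^k * m.choose k * m.choose (j-k)
      = if Even j then (-1 : ℤ)^(j/2) * m.choose (j/2) else 0 := by
  have hprod : ((1 - X : Polynomial ℤ) ^ m * (1 + X) ^ m).coeff j
      = ∑ k ∈ range (j+1), (-1 : ℤ)^k * m.choose k * m.choose (j-k) := by
    rw [coeff_mul, Finset.Nat.sum_antidiagonal_eq_sum_range_succ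
      (fun a b => ((1 - X : Polynomial ℤ) ^ m).coeff a * ((1 + X : Polynomial ℤ) ^ m).coeff b)]
    refine Finset.sum_congr rfl fun k _ => ?_
    rw [coeff_one_sub_X_pow, coeff_one_add_X_pow]
  have heq : ((1 - X : Polynomial ℤ) ^ m * (1 + X) ^ m) = (1 - X^2 : Polynomial ℤ) ^ m := by
    rw [← mul_pow]; ring_nf
  rw [← hprod, heq, coeff_one_sub_X_sq_pow]

/-- Symmetric Krawtchouk values:
`Φ^N_{n,j} = ∑_k (-1)^k C(j,k) C(N-j, n-k)`, the coefficient of `z^n` in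
`(1+z)^(N-j) (1-z)^j`. -/
def symKrawtchouk (N n j : ℕ) : ℤ :=
  ∑ k ∈ Finset.range (j + 1),
    if k ≤ n then (-1 : ℤ) ^ k * (j.choose k) * ((N - j).choose (n - k)) else 0

/-- Middle-row entries for even order `N = 2m`:
`C(2m,j)·Φ^{2m}_{m,j} = (−1)^{j/2}·C(m,j/2)·C(2m,m)` for even `j`, and
`Φ^{2m}_{m,j} = 0` for odd `j`. -/
theorem symKrawtchouk_middle_row_even (m j : ℕ) (hj : j ≤ 2 * m) :
    (Even j →
        ((2 * m).choose j : ℤ) * symKrawtchouk (2 * m) m j =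
          (-1 : ℤ) ^ (j / 2) * (m.choose (j / 2) : ℤ) * ((2 * m).choose m : ℤ)) ∧
      (Odd j → symKrawtchouk (2 * m) m j = 0) := by
  have hmain : ((2*m).choose j : ℤ) * symKrawtchouk (2*m) m j
      = ((2*m).choose m : ℤ) * ∑ k ∈ range (j+1), (-1 : ℤ)^k * m.choose k * m.choose (j-k) := by
    unfold symKrawtchouk
    rw [Finset.mul_sum, Finset.mul_sum]
    refine Finset.sum_congr rfl fun k hk => ?_
    simp only [mem_range] at hk
    by_cases hkm : k ≤ m
    · rw [if_pos hkm]
      by_cases hjk : j - k ≤ m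
      · have key := choose_four k (j-k) (m-k) (m-(j-k))
        rw [show k + (j-k) = j by omega, show (m-k) + (m-(j-k)) = 2*m - j by omega,
          show k + (m-k) = m by omega, show (j-k) + (m-(j-k)) = m by omega,
          show j + (2*m - j) = 2*m by omega, show m + m = 2*m by omega] at key
        have keyz : ((2*m).choose j * (j.choose k) * ((2*m - j).choose (m-k)) : ℤ)
            = ((2*m).choose m * (m.choose k) * (m.choose (j-k)) : ℤ) := by
          exact_mod_cast key
        linear_combination ((-1 : ℤ)^k) * keyz
      · have h1 : (2*m - j).choose (m - k) = 0 :=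
          Nat.choose_eq_zero_of_lt (by omega)
        have h2 : m.choose (j - k) = 0 :=
          Nat.choose_eq_zero_of_lt (by omega)
        simp [h1, h2]
    · rw [if_neg hkm]
      have h2 : m.choose k = 0 := Nat.choose_eq_zero_of_lt (by omega)
      simp [h2]
  rw [alt_vandermonde] at hmain
  constructor
  · intro hje
    rw [if_pos hje] at hmain
    linear_combination hmain
  · intro hjo
    rw [if_neg (Nat.not_even_iff_odd.mpr hjo)] at hmain
    have hne : ((2*m).choose j : ℤ) ≠ 0 := by
      exact_mod_cast (Nat.choose_pos hj).ne'
    simpa [hne, (Nat.choose_pos hj).ne'] using hmain
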